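/- Let F = GF(2^m) with q = 2^m, let α be a primitive element of F*, and choose as an F_2-basis of F the elements e_i = α^i for i = 1, …, m (assuming α^1, …, α^m are linearly independent over F_2). Let R ⊆ F have size k and let P be a polynomial over F of degree less than k with Lagrange coefficients c_u (u ∈ R). Define I : F → F by I(x) = x^{−1} for x ≠ 0, I(0) = 0; define C : F → F by C(y) = c_y for y ∈ R and 0 otherwise; and let C_i, I_j : F → {0,1} ⊆ ℤ be the coordinate functions of C and I in the basis e_1, …, e_m. Then for every x ∉ R, P(x) = Π(x) · ⊕_{s=0}^{2(m−1)} α^s · ((1/q)·Ŵ( Σ_{i+j=s, 1≤i,j≤m, relabeled so e_i e_j = α^s} ŴC_i · ŴI_j )(x) mod 2), i.e. the F_2-contribution of all pairs (i, j) with e_i·e_j = α^s can be computed as the parity of a single integer (1/q)·Ŵ(Σ_{i+j=s} ŴC_i·ŴI_j)(x), and summing these contributions weighted by α^s and multiplying by Π(x) recovers P(x). -/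

import Mathlib

/-- The Walsh transform of `f : F_2^m → ℤ`:
`Ŵf(x) = Σ_{y ∈ F_2^m} f(y) · (−1)^{x·y}` where `x·y = Σ_i x_i y_i mod 2`. -/
def walsh {m : ℕ} (f : (Fin m → ZMod 2) → ℤ) (x : Fin m → ZMod 2) : ℤ :=
  ∑ y : Fin m → ZMod 2, f y * (-1) ^ (∑ i, x i * y i : ZMod 2).val

open Finset Polynomial
lemma chi_add : ∀ (a b : ZMod 2), ((-1:ℤ)) ^ (a + b).val = (-1:ℤ)^a.val * (-1:ℤ)^b.val := by decide

lemma chi_sum {ι : Type*} [DecidableEq ι] (s : Finset ι) (f : ι → ZMod 2) :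
    ((-1:ℤ)) ^ (∑ i ∈ s, f i).val = ∏ i ∈ s, (-1:ℤ)^(f i).val := by
  induction s using Finset.induction_on with
  | empty => simp
  | @insert a s h ih => rw [Finset.sum_insert h, Finset.prod_insert h, chi_add, ih]

lemma orth {m : ℕ} (w : Fin m → ZMod 2) :
    ∑ z : Fin m → ZMod 2, ((-1:ℤ)) ^ (∑ i, z i * w i : ZMod 2).val
      = if w = 0 then (2:ℤ)^m else 0 := by
  have h1 : ∀ z : Fin m → ZMod 2, ((-1:ℤ)) ^ (∑ i, z i * w i : ZMod 2).val
      = ∏ i, (-1:ℤ)^((z i * w i : ZMod 2)).val := fun z => chi_sum _ _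
  simp_rw [h1]
  rw [← Fintype.piFinset_univ,
    ← prod_univ_sum (fun _ => (univ : Finset (ZMod 2)))
      (fun i t => (-1:ℤ)^((t * w i : ZMod 2)).val)]
  have hfac : ∀ a : ZMod 2, (∑ t : ZMod 2, (-1:ℤ)^((t * a : ZMod 2)).val)
      = if a = 0 then 2 else 0 := by decide
  simp_rw [hfac]
  by_cases hw : w = 0
  · simp [hw]
  · rw [if_neg hw]
    obtain ⟨i, hi⟩ := Function.ne_iff.mp hw
    exact Finset.prod_eq_zero (mem_univ i) (if_neg hi)

lemma walsh_sum {m : ℕ} {ι : Type*} (s : Finset ι) (f : ι → (Fin m → ZMod 2) → ℤ)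
    (v : Fin m → ZMod 2) :
    walsh (fun z => ∑ i ∈ s, f i z) v = ∑ i ∈ s, walsh (f i) v := by
  unfold walsh
  simp_rw [Finset.sum_mul]
  exact Finset.sum_comm

lemma walsh_ite {m : ℕ} (c : Prop) [Decidable c] (f : (Fin m → ZMod 2) → ℤ)
    (v : Fin m → ZMod 2) :
    walsh (fun z => if c then f z else 0) v = if c then walsh f v else 0 := by
  unfold walsh; split <;> simp

lemma walsh_conv {m : ℕ} (f g : (Fin m → ZMod 2) → ℤ) (v : Fin m → ZMod 2) :
    walsh (fun z => walsh f z * walsh g z) v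
      = 2^m * ∑ y : Fin m → ZMod 2, f y * g (v + y) := by
  have point : ∀ p q r : ZMod 2, p + q + r = 0 ↔ q = p + r := by decide
  have hbv : ∀ a b : Fin m → ZMod 2, (a + b + v = 0) ↔ b = a + v := by
    intro a b
    constructor
    · intro h; funext i
      have h2 := congrFun h i
      simpa using (point (a i) (b i) (v i)).1 (by simpa using h2)
    · intro h; funext i
      have h2 := congrFun h i
      simpa using (point (a i) (b i) (v i)).2 (by simpa using h2)
  have key : ∀ a b : Fin m → ZMod 2,
      (∑ z : Fin m → ZMod 2, (-1:ℤ)^(∑ i, z i * a i : ZMod 2).val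
        * (-1:ℤ)^(∑ i, z i * b i : ZMod 2).val
        * (-1:ℤ)^(∑ i, v i * z i : ZMod 2).val)
      = if a + b + v = 0 then (2:ℤ)^m else 0 := by
    intro a b
    have e1 : ∀ z : Fin m → ZMod 2,
        (-1:ℤ)^(∑ i, z i * a i : ZMod 2).val * (-1:ℤ)^(∑ i, z i * b i : ZMod 2).val
          * (-1:ℤ)^(∑ i, v i * z i : ZMod 2).val
        = (-1:ℤ)^(∑ i, z i * (a + b + v) i : ZMod 2).val := by
      intro z
      rw [← chi_add, ← chi_add]
      congr 2
      rw [← Finset.sum_add_distrib, ← Finset.sum_add_distrib]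
      exact Finset.sum_congr rfl fun i _ => by simp only [Pi.add_apply]; ring
    simp_rw [e1]
    exact orth _
  unfold walsh
  simp_rw [Finset.sum_mul_sum, Finset.sum_mul]
  rw [Finset.sum_comm]
  have e2 : ∀ a : Fin m → ZMod 2,
      (∑ z : Fin m → ZMod 2, ∑ b : Fin m → ZMod 2,
        f a * (-1:ℤ)^(∑ i, z i * a i : ZMod 2).val * (g b * (-1:ℤ)^(∑ i, z i * b i : ZMod 2).val)
          * (-1:ℤ)^(∑ i, v i * z i : ZMod 2).val)
      = f a * g (a + v) * 2^m := by
    intro a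
    rw [Finset.sum_comm]
    have e3 : ∀ b : Fin m → ZMod 2,
        (∑ z : Fin m → ZMod 2,
          f a * (-1:ℤ)^(∑ i, z i * a i : ZMod 2).val * (g b * (-1:ℤ)^(∑ i, z i * b i : ZMod 2).val)
            * (-1:ℤ)^(∑ i, v i * z i : ZMod 2).val)
        = f a * g b * (if a + b + v = 0 then (2:ℤ)^m else 0) := by
      intro b
      rw [← key a b, Finset.mul_sum]
      exact Finset.sum_congr rfl fun z _ => by ring
    simp_rw [e3]
    rw [Finset.sum_eq_single (a + v)]
    · rw [if_pos ((hbv a (a+v)).mpr rfl), mul_assoc]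
    · intro b _ hb
      rw [if_neg (fun h => hb ((hbv a b).mp h)), mul_zero]
    · intro h; exact absurd (Finset.mem_univ _) h
  calc ∑ a : Fin m → ZMod 2, ∑ z : Fin m → ZMod 2, ∑ b : Fin m → ZMod 2,
        f a * (-1:ℤ)^(∑ i, z i * a i : ZMod 2).val * (g b * (-1:ℤ)^(∑ i, z i * b i : ZMod 2).val)
          * (-1:ℤ)^(∑ i, v i * z i : ZMod 2).val
      = ∑ a : Fin m → ZMod 2, f a * g (a + v) * 2^m := Finset.sum_congr rfl fun a _ => e2 a
    _ = 2^m * ∑ y : Fin m → ZMod 2, f y * g (v + y) := by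
        rw [Finset.mul_sum]
        exact Finset.sum_congr rfl fun a _ => by rw [add_comm a v]; ring

lemma walsh_ite_conv {m : ℕ} (c : Prop) [Decidable c] (f g : (Fin m → ZMod 2) → ℤ)
    (v : Fin m → ZMod 2) :
    walsh (fun z => if c then walsh f z * walsh g z else 0) v
      = 2^m * if c then ∑ y : Fin m → ZMod 2, f y * g (v + y) else 0 := by
  by_cases hc : c
  · simp only [if_pos hc]; exact walsh_conv f g v
  · simp only [if_neg hc, mul_zero]; unfold walsh; simp

lemma lag {F : Type} [Field F] [DecidableEq F] (R : Finset F) (P : Polynomial F)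
    (hdeg : P.degree < (R.card : ℕ)) (x : F) :
    P.eval x = ∑ u ∈ R, (P.eval u / ∏ y ∈ R.erase u, (u - y)) * ∏ y ∈ R.erase u, (x - y) := by
  conv_lhs => rw [Lagrange.eq_interpolate (Set.injOn_id _) hdeg]
  rw [Lagrange.interpolate_apply, Polynomial.eval_finset_sum]
  refine Finset.sum_congr rfl fun u hu => ?_
  rw [Polynomial.eval_mul, Polynomial.eval_C]
  unfold Lagrange.basis
  rw [Polynomial.eval_prod]
  have e : ∀ y : F, Polynomial.eval x (Lagrange.basisDivisor (id u) (id y))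
      = (u - y)⁻¹ * (x - y) := by
    intro y; simp [Lagrange.basisDivisor]
  simp_rw [e]
  rw [Finset.prod_mul_distrib, div_eq_mul_inv, ← Finset.prod_inv_distrib]
  simp [mul_assoc]

lemma modcast {F : Type} [Field F] [CharP F 2] (n : ℤ) : ((n % 2 : ℤ) : F) = (n : F) := by
  have h2 : (2 : F) = 0 := by exact_mod_cast CharP.cast_eq_zero F 2
  conv_rhs => rw [← Int.mul_ediv_add_emod n 2]
  push_cast
  rw [h2]
  simp [mul_assoc]


/-- Choose the `F_2`-basis `e_i = α^i` (`i = 1, …, m`) of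
`F = GF(2^m)` given by a primitive element `α`; this identifies `F` with `F_2^m`
via the bijection `φ(v) = Σ_i v_i α^i`.  Let `P` have degree `< k = |R|`, Lagrange
coefficients `c_u`, coefficient function `C` (equal to `c` on `R`, `0` elsewhere)
and inversion `I` (with `I(0) = 0`), with `{0,1}`-valued coordinate functions
`C_i, I_j` in this basis.  Grouping the pairs `(i, j)` by the value
`e_i·e_j = α^s` (so `s` ranges over the `2(m−1)+1` values `2, …, 2m`), for every
`x = φ(v) ∉ R`:
`P(x) = Π(x) · ⊕_s α^s · parity((1/q)·Ŵ(Σ_{(i+1)+(j+1)=s} ŴC_i·ŴI_j)(v))`,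
where `q = 2^m` and `Π(x) = ∏_{y ∈ R, y ≠ x} (x + y)`. -/
theorem lagrange_evaluation_via_walsh
    {m k : ℕ} (hm : 1 ≤ m) (F : Type) [Field F] [Fintype F] [DecidableEq F] [CharP F 2]
    (hcard : Fintype.card F = 2 ^ m)
    (α : F) (hord : orderOf α = 2 ^ m - 1)
    (φ : (Fin m → ZMod 2) → F)
    (hφdef : ∀ v : Fin m → ZMod 2,
      φ v = ∑ i : Fin m, (ZMod.cast (v i) : F) * α ^ ((i : ℕ) + 1))
    (hφ : Function.Bijective φ)
    (R : Finset F) (hR : R.card = k)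
    (P : Polynomial F) (hdeg : P.degree < (k : ℕ))
    (c : F → F) (hc : ∀ u ∈ R, c u = P.eval u / ∏ y ∈ R.erase u, (u + y))
    (C I : F → F)
    (hC : ∀ y : F, C y = if y ∈ R then c y else 0)
    (hI0 : I 0 = 0) (hI : ∀ x : F, x ≠ 0 → I x = x⁻¹)
    (Ci Ij : Fin m → (Fin m → ZMod 2) → ℤ)
    (hCi01 : ∀ i v, Ci i v = 0 ∨ Ci i v = 1)
    (hIj01 : ∀ j v, Ij j v = 0 ∨ Ij j v = 1)
    (hCi : ∀ v : Fin m → ZMod 2,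
      C (φ v) = ∑ i : Fin m, ((Ci i v : ℤ) : F) * α ^ ((i : ℕ) + 1))
    (hIj : ∀ v : Fin m → ZMod 2,
      I (φ v) = ∑ j : Fin m, ((Ij j v : ℤ) : F) * α ^ ((j : ℕ) + 1)) :
    ∀ v : Fin m → ZMod 2, φ v ∉ R →
      P.eval (φ v) =
        (∏ y ∈ R.erase (φ v), (φ v + y)) *
          ∑ s ∈ Finset.Icc 2 (2 * m), α ^ s *
            (((walsh (fun z => ∑ i : Fin m, ∑ j : Fin m,
                if (i : ℕ) + 1 + ((j : ℕ) + 1) = s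
                then walsh (Ci i) z * walsh (Ij j) z else 0) v / 2 ^ m) % 2 : ℤ) : F) := by
  intro v hv
  have hneg : ∀ a : F, -a = a := fun a => CharTwo.neg_eq a
  have hsub : ∀ a b : F, a - b = a + b := fun a b => by rw [sub_eq_add_neg, hneg]
  -- φ additive
  have hφadd : ∀ a b : Fin m → ZMod 2, φ (a + b) = φ a + φ b := by
    intro a b
    rw [hφdef, hφdef, hφdef, ← Finset.sum_add_distrib]
    refine Finset.sum_congr rfl fun i _ => ?_
    rw [← add_mul]
    congr 1
    rw [Pi.add_apply, ← ZMod.castHom_apply (h := dvd_refl 2), ← ZMod.castHom_apply (h := dvd_refl 2),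
      ← ZMod.castHom_apply (h := dvd_refl 2), map_add]
  -- Step 1: compute the walsh expression
  set A : Fin m → Fin m → ℤ := fun i j => ∑ y : Fin m → ZMod 2, Ci i y * Ij j (v + y) with hA
  have hwal : ∀ s : ℕ,
      walsh (fun z => ∑ i : Fin m, ∑ j : Fin m,
        if (i : ℕ) + 1 + ((j : ℕ) + 1) = s
        then walsh (Ci i) z * walsh (Ij j) z else 0) v
      = 2^m * ∑ i : Fin m, ∑ j : Fin m,
          if (i : ℕ) + 1 + ((j : ℕ) + 1) = s then A i j else 0 := by
    intro s
    rw [walsh_sum]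
    simp_rw [walsh_sum]
    simp_rw [walsh_ite_conv, ← Finset.mul_sum]
    rfl
  have hdiv : ∀ s : ℕ,
      (walsh (fun z => ∑ i : Fin m, ∑ j : Fin m,
        if (i : ℕ) + 1 + ((j : ℕ) + 1) = s
        then walsh (Ci i) z * walsh (Ij j) z else 0) v) / 2^m
      = ∑ i : Fin m, ∑ j : Fin m,
          if (i : ℕ) + 1 + ((j : ℕ) + 1) = s then A i j else 0 := by
    intro s
    rw [hwal s, Int.mul_ediv_cancel_left _ (by positivity)]
  simp_rw [hdiv]
  have hx : φ v + φ v = 0 := by rw [← hsub]; ring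
  have hSne : ∀ u ∈ R, φ v + u ≠ 0 := by
    intro u hu h
    have h2 : φ v = -u := eq_neg_of_add_eq_zero_left h
    rw [hneg] at h2
    exact hv (h2 ▸ hu)
  have hS : (∑ s ∈ Finset.Icc 2 (2*m), α ^ s *
        (((∑ i : Fin m, ∑ j : Fin m,
          if (i : ℕ) + 1 + ((j : ℕ) + 1) = s then A i j else 0) % 2 : ℤ) : F))
      = ∑ u ∈ R, c u * (φ v + u)⁻¹ := by
    calc ∑ s ∈ Finset.Icc 2 (2*m), α ^ s *
        (((∑ i : Fin m, ∑ j : Fin m,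
          if (i : ℕ) + 1 + ((j : ℕ) + 1) = s then A i j else 0) % 2 : ℤ) : F)
        = ∑ s ∈ Finset.Icc 2 (2*m), ∑ i : Fin m, ∑ j : Fin m,
            if (i : ℕ) + 1 + ((j : ℕ) + 1) = s then α ^ s * ((A i j : ℤ) : F) else 0 := by
          refine Finset.sum_congr rfl fun sv _ => ?_
          rw [modcast]
          push_cast
          rw [Finset.mul_sum]
          refine Finset.sum_congr rfl fun i _ => ?_
          rw [Finset.mul_sum]
          refine Finset.sum_congr rfl fun j _ => ?_
          rw [mul_ite, mul_zero]
      _ = ∑ i : Fin m, ∑ j : Fin m, α ^ ((i : ℕ) + 1 + ((j : ℕ) + 1)) * ((A i j : ℤ) : F) := by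
          rw [Finset.sum_comm]
          refine Finset.sum_congr rfl fun i _ => ?_
          rw [Finset.sum_comm]
          refine Finset.sum_congr rfl fun j _ => ?_
          rw [Finset.sum_ite_eq]
          rw [if_pos]
          rw [Finset.mem_Icc]
          have := i.isLt; have := j.isLt
          omega
      _ = ∑ i : Fin m, ∑ j : Fin m, ∑ y : Fin m → ZMod 2,
            (((Ci i y : ℤ) : F) * α ^ ((i : ℕ) + 1)) *
              (((Ij j (v + y) : ℤ) : F) * α ^ ((j : ℕ) + 1)) := by
          refine Finset.sum_congr rfl fun i _ => Finset.sum_congr rfl fun j _ => ?_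
          rw [hA]
          push_cast
          rw [Finset.mul_sum]
          exact Finset.sum_congr rfl fun y _ => by rw [pow_add]; ring
      _ = ∑ i : Fin m, ∑ y : Fin m → ZMod 2, ∑ j : Fin m,
            (((Ci i y : ℤ) : F) * α ^ ((i : ℕ) + 1)) *
              (((Ij j (v + y) : ℤ) : F) * α ^ ((j : ℕ) + 1)) :=
          Finset.sum_congr rfl fun i _ => Finset.sum_comm
      _ = ∑ y : Fin m → ZMod 2, ∑ i : Fin m, ∑ j : Fin m,
            (((Ci i y : ℤ) : F) * α ^ ((i : ℕ) + 1)) *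
              (((Ij j (v + y) : ℤ) : F) * α ^ ((j : ℕ) + 1)) :=
          Finset.sum_comm
      _ = ∑ y : Fin m → ZMod 2, (∑ i : Fin m, ((Ci i y : ℤ) : F) * α ^ ((i : ℕ) + 1)) *
            (∑ j : Fin m, ((Ij j (v + y) : ℤ) : F) * α ^ ((j : ℕ) + 1)) := by
          simp_rw [Finset.sum_mul_sum]
      _ = ∑ y : Fin m → ZMod 2, C (φ y) * I (φ v + φ y) := by
          refine Finset.sum_congr rfl fun y _ => ?_
          rw [← hCi y, ← hIj (v + y), hφadd]
      _ = ∑ u : F, C u * I (φ v + u) := by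
          exact Fintype.sum_bijective φ hφ _ _ (fun y => rfl)
      _ = ∑ u ∈ R, C u * I (φ v + u) := by
          refine (Finset.sum_subset (Finset.subset_univ R) fun u _ hu => ?_).symm
          rw [hC, if_neg hu, zero_mul]
      _ = ∑ u ∈ R, c u * (φ v + u)⁻¹ := by
          refine Finset.sum_congr rfl fun u hu => ?_
          rw [hC, if_pos hu, hI _ (hSne u hu)]
  rw [hS, Finset.erase_eq_of_notMem hv]
  -- final Lagrange step
  have hdeg' : P.degree < (R.card : ℕ) := by rw [hR]; exact hdeg
  rw [lag R P hdeg' (φ v)]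
  simp_rw [hsub]
  rw [Finset.mul_sum]
  refine Finset.sum_congr rfl fun u hu => ?_
  rw [hc u hu, ← Finset.mul_prod_erase R _ hu]
  have h1 : (φ v + u) * ((Polynomial.eval u P / ∏ y ∈ R.erase u, (u + y)) * (φ v + u)⁻¹)
      = Polynomial.eval u P / ∏ y ∈ R.erase u, (u + y) := by
    rw [mul_comm, mul_assoc, inv_mul_cancel₀ (hSne u hu), mul_one]
  rw [mul_assoc, mul_comm (∏ y ∈ R.erase u, (φ v + y)) _, ← mul_assoc, h1]
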